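/- For c ∈ [1/2, 1), letting T be a complex number with e^{2πiT} = 1 - 2i sin(πc), the real part of log(1 - e^{2πi(T+c)}) equals log(4 sin(πc) sin(πc/2)), and the real part of log(1 - e^{2πi(T-c)}) equals log(4 sin(πc) cos(πc/2)). Consequently Re(-log(1 - e^{2πi(T+c)}) + log(1 - e^{2πi(T-c)})) = log(cot(πc/2)). -/

import Mathlib

open Complex

lemma abs_one_sub_aux (x y : ℝ) :
    ‖1 - ((x:ℂ) + (y:ℂ)*Complex.I)‖ = Real.sqrt ((1-x)^2 + y^2) := by
  have : (1 : ℂ) - ((x:ℂ) + (y:ℂ)*Complex.I) = ((1-x : ℝ):ℂ) + ((-y : ℝ):ℂ)*Complex.I := by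
    push_cast; ring
  rw [this, Complex.norm_def, Complex.normSq_add_mul_I]
  ring_nf

lemma sq_plus (p q s C S : ℝ) (hpq : p^2+q^2=1) (hCS : S^2+C^2=1)
    (hC : C = 1-2*s^2) (hS : S = 2*s*(q^2-p^2)) :
    (1-(C+2*s*S))^2 + (S-2*s*C)^2 = (4*s*p)^2 := by
  subst hC hS
  linear_combination (1+4*s^2)*hCS - 8*s^2*hpq

lemma sq_minus (p q s C S : ℝ) (hpq : p^2+q^2=1) (hCS : S^2+C^2=1)
    (hC : C = 1-2*s^2) (hS : S = 2*s*(q^2-p^2)) :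
    (1-(C-2*s*S))^2 + (-S-2*s*C)^2 = (4*s*q)^2 := by
  subst hC hS
  linear_combination (1+4*s^2)*hCS - 8*s^2*hpq

/-- For `c ∈ [1/2,1)` and `T` with `e^{2πiT} = 1 - 2i sin(πc)`:
`Re log(1 - e^{2πi(T+c)}) = log(4 sin(πc) sin(πc/2))`,
`Re log(1 - e^{2πi(T-c)}) = log(4 sin(πc) cos(πc/2))`, and consequently
`Re(-log(1 - e^{2πi(T+c)}) + log(1 - e^{2πi(T-c)})) = log(cot(πc/2))`. -/
theorem re_log_identities (c : ℝ) (hc : 1/2 ≤ c) (hc1 : c < 1) (T : ℂ)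
    (hT : Complex.exp (2 * Real.pi * Complex.I * T) = 1 - 2 * Complex.I * Real.sin (Real.pi * c)) :
    (Complex.log (1 - Complex.exp (2 * Real.pi * Complex.I * (T + (c:ℂ))))).re
        = Real.log (4 * Real.sin (Real.pi * c) * Real.sin (Real.pi * c / 2)) ∧
    (Complex.log (1 - Complex.exp (2 * Real.pi * Complex.I * (T - (c:ℂ))))).re
        = Real.log (4 * Real.sin (Real.pi * c) * Real.cos (Real.pi * c / 2)) ∧
    (-(Complex.log (1 - Complex.exp (2 * Real.pi * Complex.I * (T + (c:ℂ)))))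
        + Complex.log (1 - Complex.exp (2 * Real.pi * Complex.I * (T - (c:ℂ))))).re
      = Real.log (Real.cos (Real.pi * c / 2) / Real.sin (Real.pi * c / 2)) := by
  have hpi := Real.pi_pos
  have hs : 0 < Real.sin (Real.pi * c) :=
    Real.sin_pos_of_pos_of_lt_pi (by nlinarith) (by nlinarith)
  have hsa : 0 < Real.sin (Real.pi * c / 2) :=
    Real.sin_pos_of_pos_of_lt_pi (by nlinarith) (by nlinarith)
  have hca : 0 < Real.cos (Real.pi * c / 2) :=
    Real.cos_pos_of_mem_Ioo ⟨by nlinarith, by nlinarith⟩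
  -- notations
  set p := Real.sin (Real.pi * c / 2)
  set q := Real.cos (Real.pi * c / 2)
  set s := Real.sin (Real.pi * c) with hs_def
  set C := Real.cos (2 * Real.pi * c) with hC_def
  set S := Real.sin (2 * Real.pi * c) with hS_def
  have hpq : p^2 + q^2 = 1 := Real.sin_sq_add_cos_sq _
  have hCS : S^2 + C^2 = 1 := Real.sin_sq_add_cos_sq _
  have hC : C = 1 - 2*s^2 := by
    have h := Real.cos_two_mul (Real.pi*c)
    have h2 := Real.sin_sq_add_cos_sq (Real.pi*c)
    rw [show 2*(Real.pi*c) = 2*Real.pi*c from by ring] at h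
    rw [hC_def, hs_def]; linarith
  have hcosπc : Real.cos (Real.pi*c) = q^2 - p^2 := by
    have h := Real.cos_two_mul (Real.pi*c/2)
    rw [show 2*(Real.pi*c/2) = Real.pi*c from by ring] at h
    have h2 : p^2 + q^2 = 1 := hpq
    rw [h]; linarith
  have hS : S = 2*s*(q^2-p^2) := by
    have h := Real.sin_two_mul (Real.pi*c)
    rw [show 2*(Real.pi*c) = 2*Real.pi*c from by ring] at h
    rw [hS_def, h, hcosπc, hs_def]
  -- exponential splitting
  have hexpc : ∀ u : ℝ, Complex.exp (2 * Real.pi * Complex.I * (u:ℂ))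
      = ((Real.cos (2*Real.pi*u) : ℝ):ℂ) + ((Real.sin (2*Real.pi*u) : ℝ):ℂ) * Complex.I := by
    intro u
    rw [show (2 * (Real.pi:ℂ) * Complex.I * (u:ℂ)) = ((2*Real.pi*u : ℝ):ℂ) * Complex.I by
      push_cast; ring, Complex.exp_mul_I, ← Complex.ofReal_cos, ← Complex.ofReal_sin]
  have key : ∀ u : ℝ, Complex.exp (2 * Real.pi * Complex.I * (T + (u:ℂ)))
      = ((Real.cos (2*Real.pi*u) + 2*s*Real.sin (2*Real.pi*u) : ℝ):ℂ)
        + ((Real.sin (2*Real.pi*u) - 2*s*Real.cos (2*Real.pi*u) : ℝ):ℂ) * Complex.I := by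
    intro u
    have hsplit : (2 * (Real.pi:ℂ) * Complex.I * (T + (u:ℂ)))
        = 2 * Real.pi * Complex.I * T + 2 * Real.pi * Complex.I * ((u : ℝ):ℂ) := by
      ring
    rw [hsplit, Complex.exp_add, hT, hexpc u]
    simp only [Complex.ext_iff, Complex.add_re, Complex.add_im, Complex.mul_re, Complex.mul_im,
      Complex.sub_re, Complex.sub_im, Complex.one_re, Complex.one_im, Complex.I_re, Complex.I_im,
      Complex.ofReal_re, Complex.ofReal_im, Complex.re_ofNat, Complex.im_ofNat]
    constructor <;> ring
  -- abs computations
  have habsP : ‖1 - Complex.exp (2 * Real.pi * Complex.I * (T + (c:ℂ)))‖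
      = 4 * s * p := by
    rw [key c, abs_one_sub_aux, ← hC_def, ← hS_def]
    rw [show (1 - (C + 2*s*S))^2 + (S - 2*s*C)^2 = (4*s*p)^2 from
      sq_plus p q s C S hpq hCS hC hS]
    exact Real.sqrt_sq (by positivity)
  have habsM : ‖1 - Complex.exp (2 * Real.pi * Complex.I * (T - (c:ℂ)))‖
      = 4 * s * q := by
    have heq : Complex.exp (2 * Real.pi * Complex.I * (T - (c:ℂ)))
        = Complex.exp (2 * Real.pi * Complex.I * (T + ((-c : ℝ):ℂ))) := by
      push_cast; ring_nf
    rw [heq, key (-c), abs_one_sub_aux]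
    have hcn : Real.cos (2*Real.pi*(-c)) = C := by
      rw [show 2*Real.pi*(-c) = -(2*Real.pi*c) by ring, Real.cos_neg, hC_def]
    have hsn : Real.sin (2*Real.pi*(-c)) = -S := by
      rw [show 2*Real.pi*(-c) = -(2*Real.pi*c) by ring, Real.sin_neg, hS_def]
    rw [hcn, hsn]
    rw [show (1 - (C + 2*s*(-S)))^2 + (-S - 2*s*C)^2 = (4*s*q)^2 from by
      have := sq_minus p q s C S hpq hCS hC hS; linarith [this] ]
    exact Real.sqrt_sq (by positivity)
  have h1 : (Complex.log (1 - Complex.exp (2 * Real.pi * Complex.I * (T + (c:ℂ))))).re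
      = Real.log (4 * s * p) := by rw [Complex.log_re, habsP]
  have h2 : (Complex.log (1 - Complex.exp (2 * Real.pi * Complex.I * (T - (c:ℂ))))).re
      = Real.log (4 * s * q) := by rw [Complex.log_re, habsM]
  refine ⟨h1, h2, ?_⟩
  simp only [Complex.add_re, Complex.neg_re, h1, h2]
  rw [neg_add_eq_sub, ← Real.log_div (by positivity) (by positivity)]
  rw [show (4 * s * q) / (4 * s * p) = q / p from by
    rw [mul_div_mul_left _ _ (by positivity : (4:ℝ) * s ≠ 0)]]
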